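/- Let ρ^{AB}_{1j}, ρ^{AB}_{0j}, ρ^{AC}_{1k}, ρ^{AC}_{0k}, r' be real numbers with the matrix [[1, r'],[r', 1]] - M M^T positive semidefinite for M = [[ρ^{AC}_{1k}, ρ^{AB}_{1j}],[ρ^{AC}_{0k}, ρ^{AB}_{0j}]]. Then |r' - ρ^{AB}_{0j}ρ^{AB}_{1j} - ρ^{AC}_{0k}ρ^{AC}_{1k}| ≤ √((1 - (ρ^{AB}_{0j})² - (ρ^{AC}_{0k})²)(1 - (ρ^{AB}_{1j})² - (ρ^{AC}_{1k})²)). -/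

import Mathlib

theorem stmt_13 (ρAB₁ ρAB₀ ρAC₁ ρAC₀ r' : ℝ)
    (h : (!![(1 : ℝ), r'; r', 1] -
      !![ρAC₁, ρAB₁; ρAC₀, ρAB₀] * Matrix.transpose !![ρAC₁, ρAB₁; ρAC₀, ρAB₀]).PosSemidef) :
    |r' - ρAB₀ * ρAB₁ - ρAC₀ * ρAC₁| ≤
      Real.sqrt ((1 - ρAB₀ ^ 2 - ρAC₀ ^ 2) * (1 - ρAB₁ ^ 2 - ρAC₁ ^ 2)) := by
  set a : ℝ := 1 - ρAB₁ ^ 2 - ρAC₁ ^ 2 with ha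
  set c : ℝ := 1 - ρAB₀ ^ 2 - ρAC₀ ^ 2 with hc
  set b : ℝ := r' - ρAB₀ * ρAB₁ - ρAC₀ * ρAC₁ with hb
  have hA : (!![(1 : ℝ), r'; r', 1] -
      !![ρAC₁, ρAB₁; ρAC₀, ρAB₀] * Matrix.transpose !![ρAC₁, ρAB₁; ρAC₀, ρAB₀]) =
      !![a, b; b, c] := by
    ext i j
    fin_cases i <;> fin_cases j <;>
      simp [Matrix.mul_apply, Matrix.vecMul, dotProduct, Fin.sum_univ_two, Matrix.vecHead, Matrix.vecTail, ha, hb, hc] <;>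
      ring
  rw [hA] at h
  have hq : ∀ t s : ℝ, 0 ≤ a * t ^ 2 + 2 * b * t * s + c * s ^ 2 := by
    intro t s
    have := h.dotProduct_mulVec_nonneg ![t, s]
    simp [Matrix.mulVec, dotProduct, Fin.sum_univ_two, Matrix.vecHead, Matrix.vecTail]
      at this
    nlinarith [this]
  have h11 : (0:ℝ) ≤ a := by have := hq 1 0; nlinarith
  have h22 : (0:ℝ) ≤ c := by have := hq 0 1; nlinarith
  have hsq : b ^ 2 ≤ c * a := by
    nlinarith [hq c (-b), hq (-b) a, hq 1 1, hq 1 (-1), mul_nonneg h11 h22,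
      mul_nonneg (hq 1 1) (hq 1 (-1)), sq_nonneg b, sq_nonneg (a - c), sq_nonneg (a + c)]
  calc |b| = Real.sqrt (b ^ 2) := (Real.sqrt_sq_eq_abs _).symm
    _ ≤ _ := Real.sqrt_le_sqrt hsq
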